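/- Correctness of the phase recursion: Let G be a directed graph with nonnegative weights, h a positive integer, s and v vertices, and S a set of vertices such that either (a) hop(s,v) ≤ h, or (b) some b ∈ S lies on the shortest s-v path with hop(s,b) ≤ h. Let d̂(s,b) be values satisfying d̂(s,b) ≥ dist(s,b) with equality whenever hop(s,b) ≤ h. Then min( d̂(s,v) [if defined], min over b ∈ S of d̂(s,b) + dist(b,v) ) = dist(s,v), where in case (a) the first term achieves the minimum and in case (b) the second does; moreover every term is ≥ dist(s,v). -/

import Mathlib

/-- Correctness of the phase recursion: `dhat` are `h`-hop-accurate estimates of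
distances from `s` (`dhat x ≥ dist s x`, with equality when `hop s x ≤ h`). If either
(a) `hop s v ≤ h`, or (b) some `b ∈ S` lies on the shortest `s`-`v` path with
`hop s b ≤ h`, then `min(dhat v, min_{b ∈ S} (dhat b + dist b v)) = dist s v`, and every
term in the minimum is `≥ dist s v`. -/
theorem stmt_12 {V : Type*} (dist : V → V → ℝ) (hop : V → V → ℕ) (h : ℕ)
    (s v : V) (S : Finset V) (dhat : V → ℝ)
    (htri : ∀ b, dist s v ≤ dist s b + dist b v)
    (hacc : ∀ x, dist s x ≤ dhat x)
    (haccEq : ∀ x, hop s x ≤ h → dhat x = dist s x)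
    (hcase : hop s v ≤ h ∨ ∃ b ∈ S, dist s v = dist s b + dist b v ∧ hop s b ≤ h) :
    sInf (insert (dhat v) ((fun b => dhat b + dist b v) '' (S : Set V))) = dist s v ∧
      ∀ x ∈ insert (dhat v) ((fun b => dhat b + dist b v) '' (S : Set V)),
        dist s v ≤ x := by
  set T := insert (dhat v) ((fun b => dhat b + dist b v) '' (S : Set V)) with hT
  have hlb : ∀ x ∈ T, dist s v ≤ x := by
    intro x hx
    rcases hx with rfl | ⟨b, hb, rfl⟩
    · exact hacc v
    · exact le_trans (htri b) (add_le_add_left (hacc b) _)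
  refine ⟨le_antisymm ?_ (le_csInf ⟨dhat v, Set.mem_insert _ _⟩ hlb), hlb⟩
  have hbdd : BddBelow T := ⟨dist s v, hlb⟩
  rcases hcase with hv | ⟨b, hb, heq, hhop⟩
  · have : dhat v = dist s v := haccEq v hv
    calc sInf T ≤ dhat v := csInf_le hbdd (Set.mem_insert _ _)
      _ = dist s v := this
  · have hmem : dhat b + dist b v ∈ T := Set.mem_insert_iff.2 (Or.inr ⟨b, hb, rfl⟩)
    calc sInf T ≤ dhat b + dist b v := csInf_le hbdd hmem
      _ = dist s v := by rw [haccEq b hhop, heq]
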